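/- Let V ∈ ℂ^{M×M} be Hermitian and let q̂ ∈ ℝ³. For each pair p = (m,r) with 1 ≤ m < r ≤ M set Δ_p = d_m − d_r, u_p = |V_{mr}|, ψ_p = arg(V_{mr}); choose an integer z_p minimizing |ψ_p + π − ω Δ_pᵀ q̂ + 2πz| over z ∈ ℤ, and set ψ̂_p = ψ_p + π + 2π z_p and û_p = (u_p / M)·sinc(ψ̂_p − ω Δ_pᵀ q̂). Then there exists a constant c ∈ ℝ (independent of q) such that for all q ∈ ℝ³, a(q)^H V a(q) ≤ Σ_{p} û_p·(ψ̂_p − ω Δ_pᵀ q)² + c, with equality when q = q̂. -/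

import Mathlib

open Matrix Real

/-- The unnormalized sinc function: `sinc x = sin x / x` for `x ≠ 0` and `sinc 0 = 1`. -/
noncomputable def sinc (x : ℝ) : ℝ := if x = 0 then 1 else Real.sin x / x

lemma sinc_neg (x : ℝ) : _root_.sinc (-x) = _root_.sinc x := by
  unfold _root_.sinc
  rcases eq_or_ne x 0 with rfl | h
  · simp
  · rw [if_neg (neg_ne_zero.2 h), if_neg h, Real.sin_neg, neg_div_neg_eq]

lemma concSin {p q : ℝ} (hp : 0 ≤ p) (hpq : p ≤ q) (hq : q ≤ π) :
    p * Real.sin q ≤ q * Real.sin p := by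
  rcases eq_or_lt_of_le (hp.trans hpq) with hq0 | hq0
  · have : p = 0 := le_antisymm (hpq.trans hq0.symm.le) hp
    simp [this, ← hq0, hpq.trans hq0.symm.le]
  have m0 : (0:ℝ) ∈ Set.Icc (0:ℝ) π := ⟨le_rfl, Real.pi_pos.le⟩
  have mq : q ∈ Set.Icc (0:ℝ) π := ⟨hp.trans hpq, hq⟩
  have ha : (0:ℝ) ≤ 1 - p/q := by
    have : p/q ≤ 1 := (div_le_one hq0).2 hpq
    linarith
  have hb : (0:ℝ) ≤ p/q := by positivity
  have key := strictConcaveOn_sin_Icc.concaveOn.2 m0 mq ha hb (by ring)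
  simp only [smul_eq_mul, mul_zero, Real.sin_zero, zero_add] at key
  rw [div_mul_cancel₀ _ hq0.ne'] at key
  calc p * Real.sin q = q * (p/q * Real.sin q) := by field_simp
  _ ≤ q * Real.sin p := by
      apply mul_le_mul_of_nonneg_left _ (hp.trans hpq)
      linarith [key]

lemma sinc_nonneg_of {a : ℝ} (h0 : 0 ≤ a) (h1 : a ≤ π) : 0 ≤ _root_.sinc a := by
  unfold _root_.sinc
  rcases eq_or_ne a 0 with rfl | h
  · simp
  · rw [if_neg h]
    exact div_nonneg (Real.sin_nonneg_of_nonneg_of_le_pi h0 h1) h0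

lemma key0 {a : ℝ} (h0 : 0 ≤ a) (h1 : a ≤ π) (x : ℝ) (hx : 0 ≤ x) :
    Real.cos a + _root_.sinc a * a ^ 2 / 2 ≤ Real.cos x + _root_.sinc a * x ^ 2 / 2 := by
  set s : ℝ := _root_.sinc a with hs
  have hsnn : 0 ≤ s := sinc_nonneg_of h0 h1
  have hsle : ∀ y : ℝ, 0 ≤ y → y ≤ a → s * y ≤ Real.sin y := by
    intro y hy hya
    rcases eq_or_lt_of_le (hy.trans hya) with h | hap
    · have : y = 0 := le_antisymm (hya.trans h.symm.le) hy
      simp [this]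
    · have := concSin hy hya h1
      rw [hs]; unfold _root_.sinc; rw [if_neg hap.ne']
      rw [div_mul_eq_mul_div, div_le_iff₀ hap]
      linarith [concSin hy hya h1]
  have hsge : ∀ y : ℝ, a ≤ y → y ≤ π → Real.sin y ≤ s * y := by
    intro y hay hyp
    rcases eq_or_lt_of_le h0 with h | hap
    · rw [hs]; unfold _root_.sinc; rw [← h, if_pos rfl, one_mul]
      exact Real.sin_le (h ▸ hay)
    · rw [hs]; unfold _root_.sinc; rw [if_neg hap.ne']
      rw [div_mul_eq_mul_div, le_div_iff₀ hap]
      linarith [concSin h0 hay hyp]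
  -- the function and its derivative
  set h : ℝ → ℝ := fun y => Real.cos y + s * y ^ 2 / 2 with hh
  have hd : ∀ y : ℝ, HasDerivAt h (s * y - Real.sin y) y := by
    intro y
    have : HasDerivAt h (-Real.sin y + s * (2 * y ^ 1) / 2) y :=
      (Real.hasDerivAt_cos y).add (((hasDerivAt_pow 2 y).const_mul s).div_const 2)
    convert this using 1; ring
  have hmono : MonotoneOn h (Set.Icc a π) := by
    apply monotoneOn_of_deriv_nonneg (convex_Icc a π)
    · exact fun y _ => ((hd y).continuousAt).continuousWithinAt
    · exact fun y _ => ((hd y).differentiableAt).differentiableWithinAt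
    · intro y hy
      rw [interior_Icc] at hy
      rw [(hd y).deriv]
      have := hsge y hy.1.le hy.2.le
      linarith
  have hanti : AntitoneOn h (Set.Icc 0 a) := by
    apply antitoneOn_of_deriv_nonpos (convex_Icc 0 a)
    · exact fun y _ => ((hd y).continuousAt).continuousWithinAt
    · exact fun y _ => ((hd y).differentiableAt).differentiableWithinAt
    · intro y hy
      rw [interior_Icc] at hy
      rw [(hd y).deriv]
      have := hsle y hy.1.le hy.2.le
      linarith
  show h a ≤ h x
  rcases le_or_gt x a with hxa | hax
  · exact hanti ⟨hx, hxa⟩ ⟨h0, le_rfl⟩ hxa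
  rcases le_or_gt x π with hxpi | hpix
  · exact hmono ⟨le_rfl, h1⟩ ⟨hax.le, hxpi⟩ hax.le
  -- x > π
  have hclaim : 1 + Real.cos a ≤ s * (π ^ 2 - a ^ 2) / 2 := by
    rcases eq_or_lt_of_le h0 with h | hap
    · rw [hs, ← h]
      norm_num [_root_.sinc]
      nlinarith [Real.pi_gt_three]
    · set sa := Real.sin (a/2) with hsa
      set ca := Real.cos (a/2) with hca
      have hcos : Real.cos a = 2 * ca ^ 2 - 1 := by
        rw [hca, ← Real.cos_two_mul]
        congr 1; ring
      have hsin : Real.sin a = 2 * sa * ca := by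
        rw [hsa, hca, ← Real.sin_two_mul]
        congr 1; ring
      have hcann : 0 ≤ ca := Real.cos_nonneg_of_mem_Icc ⟨by linarith [Real.pi_pos], by linarith⟩
      have hjordan : a / π ≤ sa := by
        have := Real.mul_le_sin (x := a/2) (by linarith) (by linarith)
        rw [← hsa] at this
        calc a / π = 2/π * (a/2) := by ring
        _ ≤ sa := this
      have hcale : ca ≤ (π - a)/2 := by
        have h2 : Real.sin (π/2 - a/2) = ca := by rw [Real.sin_pi_div_two_sub, hca]
        have := Real.sin_le (x := π/2 - a/2) (by linarith)
        rw [h2] at this; linarith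
      have hsval : s = Real.sin a / a := by rw [hs]; unfold _root_.sinc; rw [if_neg hap.ne']
      rw [hsval, hcos, hsin]
      rw [div_mul_eq_mul_div, div_div, le_div_iff₀ (by positivity)]
      have hpa : 0 ≤ π - a := by linarith
      have hsann : 0 ≤ sa := le_trans (by positivity) hjordan
      have H1 : 2*ca ≤ π - a := by linarith
      have H2 : a ≤ sa * π := by
        rw [div_le_iff₀ Real.pi_pos] at hjordan; linarith
      have P1 := mul_le_mul_of_nonneg_left H1
        (by positivity : (0:ℝ) ≤ 2*sa*ca*(π+a))
      have P2 := mul_le_mul_of_nonneg_left H2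
        (by positivity : (0:ℝ) ≤ 4*ca^2)
      have P3 : (0:ℝ) ≤ sa*ca^2*a := by positivity
      nlinarith [P1, P2, P3]
  have hx2 : π ^ 2 ≤ x ^ 2 := by nlinarith [Real.pi_pos]
  have hcx : -1 ≤ Real.cos x := Real.neg_one_le_cos x
  show Real.cos a + s * a ^ 2 / 2 ≤ Real.cos x + s * x ^ 2 / 2
  nlinarith [mul_le_mul_of_nonneg_left hx2 hsnn]

lemma key {a : ℝ} (ha : |a| ≤ π) (x : ℝ) :
    Real.cos a + _root_.sinc a * a ^ 2 / 2 ≤ Real.cos x + _root_.sinc a * x ^ 2 / 2 := by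
  have h1 : Real.cos a + _root_.sinc a * a ^ 2 / 2 = Real.cos |a| + _root_.sinc |a| * |a| ^ 2 / 2 := by
    rcases abs_choice a with h | h <;> rw [h] <;> simp [_root_.sinc_neg, Real.cos_neg]
  have h2 : Real.cos x + _root_.sinc a * x ^ 2 / 2 = Real.cos |x| + _root_.sinc |a| * |x| ^ 2 / 2 := by
    rcases abs_choice a with h | h <;> rcases abs_choice x with h' | h' <;>
      rw [h, h'] <;> simp [_root_.sinc_neg, Real.cos_neg]
  rw [h1, h2]
  exact key0 (abs_nonneg a) ha |x| (abs_nonneg x)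

lemma re_mul_exp (w : ℂ) (θ : ℝ) :
    (w * Complex.exp (Complex.I * (θ : ℂ))).re
      = ‖w‖ * Real.cos (Complex.arg w + θ) := by
  conv_lhs => rw [← Complex.norm_mul_exp_arg_mul_I w]
  rw [mul_assoc, ← Complex.exp_add]
  have h : (Complex.arg w : ℂ) * Complex.I + Complex.I * (θ : ℂ)
      = ((Complex.arg w + θ : ℝ) : ℂ) * Complex.I := by push_cast; ring
  rw [h, Complex.re_ofReal_mul, Complex.exp_ofReal_mul_I_re]

/-- The steering vector `a(q) = M^{-1/2} (exp(i ω d_1ᵀ q), …, exp(i ω d_Mᵀ q))`. -/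
noncomputable def steer (M : ℕ) (d : Fin M → Fin 3 → ℝ) (ω : ℝ) (q : Fin 3 → ℝ) :
    Fin M → ℂ :=
  fun m => ((Real.sqrt M : ℝ) : ℂ)⁻¹ * Complex.exp (Complex.I * ((ω * (d m ⬝ᵥ q) : ℝ) : ℂ))

lemma steer_T (M : ℕ) (hM : 1 ≤ M) (d : Fin M → Fin 3 → ℝ) (ω : ℝ)
    (V : Matrix (Fin M) (Fin M) ℂ) (q : Fin 3 → ℝ) (m r : Fin M) :
    ((starRingEnd ℂ) (steer M d ω q m) * (V m r * steer M d ω q r)).re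
      = ‖V m r‖ / M *
          Real.cos (Complex.arg (V m r) - ω * ((d m - d r) ⬝ᵥ q)) := by
  unfold steer
  rw [_root_.map_mul, map_inv₀, Complex.conj_ofReal, ← Complex.exp_conj, _root_.map_mul,
    Complex.conj_I, Complex.conj_ofReal]
  have hMr : (((Real.sqrt M : ℝ)) : ℂ)⁻¹ * (((Real.sqrt M : ℝ)) : ℂ)⁻¹
      = (((M : ℝ)⁻¹ : ℝ) : ℂ) := by
    rw [← Complex.ofReal_inv, ← Complex.ofReal_mul]
    congr 1
    rw [← mul_inv, Real.mul_self_sqrt (by positivity)]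
  have hexp : Complex.exp (-Complex.I * ((ω * (d m ⬝ᵥ q) : ℝ) : ℂ)) *
      Complex.exp (Complex.I * ((ω * (d r ⬝ᵥ q) : ℝ) : ℂ))
      = Complex.exp (Complex.I * ((ω * (d r ⬝ᵥ q) - ω * (d m ⬝ᵥ q) : ℝ) : ℂ)) := by
    rw [← Complex.exp_add]
    congr 1
    push_cast
    ring
  have hre : ((((Real.sqrt M : ℝ)) : ℂ)⁻¹ * Complex.exp (-Complex.I * ((ω * (d m ⬝ᵥ q) : ℝ) : ℂ)) *
      (V m r * ((((Real.sqrt M : ℝ)) : ℂ)⁻¹ * Complex.exp (Complex.I * ((ω * (d r ⬝ᵥ q) : ℝ) : ℂ)))))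
      = (((M : ℝ)⁻¹ : ℝ) : ℂ) * (V m r *
          Complex.exp (Complex.I * ((ω * (d r ⬝ᵥ q) - ω * (d m ⬝ᵥ q) : ℝ) : ℂ))) := by
    rw [← hMr, ← hexp]; ring
  rw [hre, Complex.re_ofReal_mul, re_mul_exp]
  have harg : Complex.arg (V m r) + (ω * (d r ⬝ᵥ q) - ω * (d m ⬝ᵥ q))
      = Complex.arg (V m r) - ω * ((d m - d r) ⬝ᵥ q) := by
    rw [sub_dotProduct]; ring
  rw [harg]
  ring

lemma conj_triple_re (a b c : ℂ) :
    ((starRingEnd ℂ) a * ((starRingEnd ℂ) b * c)).re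
      = ((starRingEnd ℂ) c * (b * a)).re := by
  have h : (starRingEnd ℂ) a * ((starRingEnd ℂ) b * c)
      = (starRingEnd ℂ) ((starRingEnd ℂ) c * (b * a)) := by
    rw [_root_.map_mul, _root_.map_mul, Complex.conj_conj]
    ring
  rw [h, Complex.conj_re]

/-- The set of distinct pairs `{(m,r) : m < r}`. -/
def pairs (M : ℕ) : Finset (Fin M × Fin M) := Finset.univ.filter fun p => p.1 < p.2

lemma quadform_decomp (M : ℕ) (hM : 1 ≤ M) (d : Fin M → Fin 3 → ℝ) (ω : ℝ)
    (V : Matrix (Fin M) (Fin M) ℂ) (hV : V.IsHermitian) (q : Fin 3 → ℝ) :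
    (star (steer M d ω q) ⬝ᵥ V.mulVec (steer M d ω q)).re
      = (∑ m : Fin M, ‖V m m‖ / M * Real.cos (Complex.arg (V m m)))
        + 2 * ∑ p ∈ pairs M, ‖V p.1 p.2‖ / M *
            Real.cos (Complex.arg (V p.1 p.2) - ω * ((d p.1 - d p.2) ⬝ᵥ q)) := by
  classical
  set w := steer M d ω q with hw
  set T : Fin M × Fin M → ℝ :=
    fun p => ((starRingEnd ℂ) (w p.1) * (V p.1 p.2 * w p.2)).re with hT
  have step2 : (star w ⬝ᵥ V.mulVec w).re
      = ∑ p ∈ (Finset.univ ×ˢ Finset.univ : Finset (Fin M × Fin M)), T p := by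
    rw [Finset.sum_product]
    simp only [hT, dotProduct, Matrix.mulVec, Pi.star_apply, Complex.star_def,
      Finset.mul_sum, Complex.re_sum]
  have hTval : ∀ p : Fin M × Fin M, T p = ‖V p.1 p.2‖ / M *
      Real.cos (Complex.arg (V p.1 p.2) - ω * ((d p.1 - d p.2) ⬝ᵥ q)) :=
    fun p => steer_T M hM d ω V q p.1 p.2
  have hTswap : ∀ p : Fin M × Fin M, T p.swap = T p := by
    intro p
    show ((starRingEnd ℂ) (w p.2) * (V p.2 p.1 * w p.1)).re = _
    rw [← hV.apply p.2 p.1]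
    exact conj_triple_re (w p.2) (V p.1 p.2) (w p.1)
  rw [step2]
  rw [Finset.univ_product_univ]
  rw [← Finset.sum_filter_add_sum_filter_not Finset.univ (fun p : Fin M × Fin M => p.1 < p.2) T]
  rw [← Finset.sum_filter_add_sum_filter_not
        (Finset.univ.filter (fun p : Fin M × Fin M => ¬ p.1 < p.2))
        (fun p : Fin M × Fin M => p.2 < p.1) T]
  have hfil1 : (Finset.univ.filter (fun p : Fin M × Fin M => ¬ p.1 < p.2)).filter
      (fun p : Fin M × Fin M => p.2 < p.1)
      = Finset.univ.filter (fun p : Fin M × Fin M => p.2 < p.1) := by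
    rw [Finset.filter_filter]
    apply Finset.filter_congr
    intro p _
    constructor
    · exact fun h => h.2
    · exact fun h => ⟨lt_asymm h, h⟩
  have hfil2 : (Finset.univ.filter (fun p : Fin M × Fin M => ¬ p.1 < p.2)).filter
      (fun p : Fin M × Fin M => ¬ p.2 < p.1)
      = Finset.univ.filter (fun p : Fin M × Fin M => p.1 = p.2) := by
    rw [Finset.filter_filter]
    apply Finset.filter_congr
    intro p _
    constructor
    · exact fun h => le_antisymm (not_lt.1 h.2) (not_lt.1 h.1)
    · exact fun h => ⟨by simp [h], by simp [h]⟩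
  rw [hfil1, hfil2]
  have hswap_sum : ∑ p ∈ Finset.univ.filter (fun p : Fin M × Fin M => p.2 < p.1), T p
      = ∑ p ∈ pairs M, T p := by
    apply Finset.sum_nbij' (i := Prod.swap) (j := Prod.swap)
    · intro p hp
      simp only [Finset.mem_filter, Finset.mem_univ, true_and] at hp ⊢
      simpa [pairs]
    · intro p hp
      simp only [pairs, Finset.mem_filter, Finset.mem_univ, true_and] at hp ⊢
      simpa
    · intro p _; simp
    · intro p _; simp
    · intro p _; rw [← hTswap p]
  have hdiag : ∑ p ∈ Finset.univ.filter (fun p : Fin M × Fin M => p.1 = p.2), T p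
      = ∑ m : Fin M, ‖V m m‖ / M * Real.cos (Complex.arg (V m m)) := by
    rw [Finset.sum_filter, ← Finset.univ_product_univ, Finset.sum_product]
    apply Finset.sum_congr rfl
    intro m _
    rw [Finset.sum_ite_eq Finset.univ m (fun r => T (m, r))]
    simp only [Finset.mem_univ, if_true]
    rw [hTval (m, m)]
    simp [sub_dotProduct]
  rw [hswap_sum, hdiag]
  have hpp : ∑ p ∈ Finset.univ.filter (fun p : Fin M × Fin M => p.1 < p.2), T p
      = ∑ p ∈ pairs M, T p := rfl
  rw [hpp]
  have hform : ∑ p ∈ pairs M, T p = ∑ p ∈ pairs M,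
      ‖V p.1 p.2‖ / M *
        Real.cos (Complex.arg (V p.1 p.2) - ω * ((d p.1 - d p.2) ⬝ᵥ q)) :=
    Finset.sum_congr rfl fun p _ => hTval p
  rw [hform]
  ring

/-- Quadratic majorization of the steered quadratic form `a(q)^H V a(q)`:
there is a constant `c` such that
`a(q)^H V a(q) ≤ Σ_p û_p (ψ̂_p − ω Δ_pᵀ q)² + c` for all `q`, with equality at `q = q̂`. -/
theorem quadratic_majorization_of_quadratic_form (M : ℕ) (hM : 2 ≤ M)
    (d : Fin M → Fin 3 → ℝ) (ω : ℝ) (hω : 0 < ω)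
    (V : Matrix (Fin M) (Fin M) ℂ) (hV : V.IsHermitian)
    (qhat : Fin 3 → ℝ)
    (z : Fin M × Fin M → ℤ)
    (hz : ∀ p ∈ pairs M, ∀ z' : ℤ,
      |Complex.arg (V p.1 p.2) + π - ω * ((d p.1 - d p.2) ⬝ᵥ qhat) + 2 * π * (z p : ℝ)| ≤
      |Complex.arg (V p.1 p.2) + π - ω * ((d p.1 - d p.2) ⬝ᵥ qhat) + 2 * π * (z' : ℝ)|)
    (ψh uh : Fin M × Fin M → ℝ)
    (hψh : ∀ p, ψh p = Complex.arg (V p.1 p.2) + π + 2 * π * (z p : ℝ))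
    (huh : ∀ p, uh p =
      (‖V p.1 p.2‖ / (M : ℝ)) * _root_.sinc (ψh p - ω * ((d p.1 - d p.2) ⬝ᵥ qhat))) :
    ∃ c : ℝ,
      (∀ q : Fin 3 → ℝ,
        (star (steer M d ω q) ⬝ᵥ V.mulVec (steer M d ω q)).re ≤
          (∑ p ∈ pairs M, uh p * (ψh p - ω * ((d p.1 - d p.2) ⬝ᵥ q)) ^ 2) + c) ∧
      (star (steer M d ω qhat) ⬝ᵥ V.mulVec (steer M d ω qhat)).re =
          (∑ p ∈ pairs M, uh p * (ψh p - ω * ((d p.1 - d p.2) ⬝ᵥ qhat)) ^ 2) + c := by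
  classical
  have hM1 : 1 ≤ M := le_trans (by norm_num) hM
  have hMpos : (0:ℝ) < M := by exact_mod_cast Nat.lt_of_lt_of_le Nat.zero_lt_one hM1
  set F : (Fin 3 → ℝ) → ℝ :=
    fun q => (star (steer M d ω q) ⬝ᵥ V.mulVec (steer M d ω q)).re with hF
  set G : (Fin 3 → ℝ) → ℝ :=
    fun q => ∑ p ∈ pairs M, uh p * (ψh p - ω * ((d p.1 - d p.2) ⬝ᵥ q)) ^ 2 with hG
  refine ⟨F qhat - G qhat, fun q => ?_, by ring⟩
  -- per-pair majorization
  have main : ∀ p ∈ pairs M,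
      2 * (‖V p.1 p.2‖ / M *
          Real.cos (Complex.arg (V p.1 p.2) - ω * ((d p.1 - d p.2) ⬝ᵥ q)))
        - uh p * (ψh p - ω * ((d p.1 - d p.2) ⬝ᵥ q)) ^ 2
      ≤ 2 * (‖V p.1 p.2‖ / M *
          Real.cos (Complex.arg (V p.1 p.2) - ω * ((d p.1 - d p.2) ⬝ᵥ qhat)))
        - uh p * (ψh p - ω * ((d p.1 - d p.2) ⬝ᵥ qhat)) ^ 2 := by
    intro p hp
    set u : ℝ := ‖V p.1 p.2‖ with hu
    set ψ : ℝ := Complex.arg (V p.1 p.2) with hψ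
    set Δq : ℝ := ω * ((d p.1 - d p.2) ⬝ᵥ q) with hΔq
    set Δh : ℝ := ω * ((d p.1 - d p.2) ⬝ᵥ qhat) with hΔh
    set x : ℝ := ψh p - Δq with hx
    set x0 : ℝ := ψh p - Δh with hx0
    have hcosx : Real.cos x = - Real.cos (ψ - Δq) := by
      have h1 : x = (ψ - Δq + π) + (z p : ℝ) * (2*π) := by
        rw [hx, hψh p]; ring
      rw [h1, Real.cos_add_int_mul_two_pi, Real.cos_add_pi]
    have hcosx0 : Real.cos x0 = - Real.cos (ψ - Δh) := by
      have h1 : x0 = (ψ - Δh + π) + (z p : ℝ) * (2*π) := by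
        rw [hx0, hψh p]; ring
      rw [h1, Real.cos_add_int_mul_two_pi, Real.cos_add_pi]
    have hx0pi : |x0| ≤ π := by
      have hz1 := hz p hp (z p + 1)
      have hz2 := hz p hp (z p - 1)
      have e0 : ψ + π - Δh + 2 * π * ((z p : ℤ) : ℝ) = x0 := by
        rw [hx0, hψh p]; ring
      have e1 : ψ + π - Δh + 2 * π * ((z p + 1 : ℤ) : ℝ) = x0 + 2*π := by
        rw [hx0, hψh p]; push_cast; ring
      have e2 : ψ + π - Δh + 2 * π * ((z p - 1 : ℤ) : ℝ) = x0 - 2*π := by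
        rw [hx0, hψh p]; push_cast; ring
      rw [e0, e1] at hz1
      rw [e0, e2] at hz2
      have s1 : x0^2 ≤ (x0 + 2*π)^2 := by
        have := pow_le_pow_left₀ (abs_nonneg _) hz1 2
        rwa [sq_abs, sq_abs] at this
      have s2 : x0^2 ≤ (x0 - 2*π)^2 := by
        have := pow_le_pow_left₀ (abs_nonneg _) hz2 2
        rwa [sq_abs, sq_abs] at this
      have hπ := Real.pi_pos
      exact abs_le.2 ⟨by nlinarith, by nlinarith⟩
    have hkey := key hx0pi x
    have huhp : uh p = u / M * _root_.sinc x0 := by rw [huh p]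
    have hunn : (0:ℝ) ≤ u / M := by positivity
    have hmul := mul_le_mul_of_nonneg_left hkey hunn
    have hq : Real.cos (ψ - Δq) = - Real.cos x := by rw [hcosx]; ring
    have hh : Real.cos (ψ - Δh) = - Real.cos x0 := by rw [hcosx0]; ring
    rw [hq, hh, huhp]
    nlinarith [hmul]
  -- assemble
  have hdq := quadform_decomp M hM1 d ω V hV q
  have hdh := quadform_decomp M hM1 d ω V hV qhat
  have hsum := Finset.sum_le_sum main
  rw [Finset.sum_sub_distrib, Finset.sum_sub_distrib, ← Finset.mul_sum, ← Finset.mul_sum]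
    at hsum
  show F q ≤ G q + (F qhat - G qhat)
  simp only [hF, hG]
  rw [hdq, hdh]
  linarith [hsum]
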